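/- Let π be a Markovian policy on a finite-horizon Markov game skeleton such that for every stage (h, s) and every player i, either exactly one action j ∈ A_i has p^{h,s}_{ij} > 0, or there exist j, k ∈ A_i with j ≠ k, p^{h,s}_{ij} > 0, p^{h,s}_{ik} > 0, and σ^{h,s}_{ij} ≠ σ^{h,s}_{ik}. Then for every B > 0 there exists a reward function r with |r_{i,h}(s,a)| ≤ B for all i, h, s, a such that for every player i, every h ∈ {1, …, H}, every s ∈ S, and every deterministic Markov deviation d for player i satisfying p^{h',s'}_{i, d(h',s')} < 1 for all stages (h', s'), one has V^π_{i,h}(s) > V^{d}_{i,h}(s). -/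

import Mathlib

open scoped BigOperators

section Prelim

variable {n : ℕ}

/-- Joint action obtained from player `i`'s action `j` and the other players' actions `b`,
i.e. the joint action `(j, a_{-i})`. -/
def joinA {A : Fin n → Type*} (i : Fin n) (j : A i)
    (b : ∀ l : {l : Fin n // l ≠ i}, A l) : ∀ l, A l :=
  fun l => if h : l = i then h.symm ▸ j else b ⟨l, h⟩

/-- The actions `a_{-i}` of all players other than `i` in the joint action `a`. -/
def restr {A : Fin n → Type*} (i : Fin n) (a : ∀ l, A l) :
    ∀ l : {l : Fin n // l ≠ i}, A l :=
  fun l => a l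

/-- `σ` is a mixed strategy: nonnegative and sums to one. -/
def IsMixed {X : Type*} [Fintype X] (σ : X → ℝ) : Prop :=
  (∀ x, 0 ≤ σ x) ∧ ∑ x, σ x = 1

/-- Marginal probability `p_{ij}` that player `i` plays `j` under `σ`. -/
noncomputable def marg {A : Fin n → Type*} [∀ l, Fintype (A l)]
    (σ : (∀ l, A l) → ℝ) (i : Fin n) (j : A i) : ℝ :=
  ∑ b : ∀ l : {l : Fin n // l ≠ i}, A l, σ (joinA i j b)

/-- Conditional distribution `σ_{ij}` over the other players' actions:
`σ_{ij}(a_{-i}) = σ(j, a_{-i}) / p_{ij}` if `p_{ij} > 0`, and the zero function otherwise. -/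
noncomputable def condl {A : Fin n → Type*} [∀ l, Fintype (A l)]
    (σ : (∀ l, A l) → ℝ) (i : Fin n) (j : A i) :
    (∀ l : {l : Fin n // l ≠ i}, A l) → ℝ :=
  fun b => if 0 < marg σ i j then σ (joinA i j b) / marg σ i j else 0

/-- Euclidean norm `‖·‖₂` on `ℝ^X`. -/
noncomputable def norm2 {X : Type*} [Fintype X] (f : X → ℝ) : ℝ :=
  Real.sqrt (∑ x, f x ^ 2)

/-- Euclidean inner product `⟨·,·⟩` on `ℝ^X`. -/
noncomputable def inner2 {X : Type*} [Fintype X] (f g : X → ℝ) : ℝ :=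
  ∑ x, f x * g x

/-- The witness utility `w_i(j, a_{-i}) = σ_{ij}(a_{-i}) / ‖σ_{ij}‖₂` if `p_{ij} > 0`,
and `0` otherwise. -/
noncomputable def wit {A : Fin n → Type*} [∀ l, Fintype (A l)]
    (σ : (∀ l, A l) → ℝ) (i : Fin n) (a : ∀ l, A l) : ℝ :=
  if 0 < marg σ i (a i) then condl σ i (a i) (restr i a) / norm2 (condl σ i (a i)) else 0

open Classical in
/-- `t_{ijk} = ‖σ_{ij}‖₂ - ⟨σ_{ij}, σ_{ik}⟩ / ‖σ_{ik}‖₂` if `σ_{ik} ≠ 0`,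
and `t_{ijk} = ‖σ_{ij}‖₂` if `σ_{ik} = 0`. -/
noncomputable def tq {A : Fin n → Type*} [∀ l, Fintype (A l)]
    (σ : (∀ l, A l) → ℝ) (i : Fin n) (j k : A i) : ℝ :=
  if condl σ i k = 0 then norm2 (condl σ i j)
  else norm2 (condl σ i j) - inner2 (condl σ i j) (condl σ i k) / norm2 (condl σ i k)

end Prelim

section AuxNorm2

variable {X : Type*} [Fintype X]

lemma norm2_nonneg' (f : X → ℝ) : 0 ≤ norm2 f := Real.sqrt_nonneg _

lemma norm2_eq_norm (f : X → ℝ) :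
    norm2 f = ‖(WithLp.equiv 2 (X → ℝ)).symm f‖ := by
  rw [norm2, EuclideanSpace.norm_eq]
  congr 1
  refine Finset.sum_congr rfl fun x _ => ?_
  simp [Real.norm_eq_abs, sq_abs]

lemma inner2_eq_inner (f g : X → ℝ) :
    inner2 f g = (inner ℝ ((WithLp.equiv 2 (X → ℝ)).symm f) ((WithLp.equiv 2 (X → ℝ)).symm g) : ℝ) := by
  rw [inner2, PiLp.inner_apply]
  refine Finset.sum_congr rfl fun x _ => ?_
  simp [RCLike.inner_apply, starRingEnd_apply, mul_comm]

lemma inner2_le_norm2 (f g : X → ℝ) : inner2 f g ≤ norm2 f * norm2 g := by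
  rw [inner2_eq_inner, norm2_eq_norm f, norm2_eq_norm g]
  exact real_inner_le_norm _ _

lemma norm2_pos {f : X → ℝ} (hf : ∑ x, f x = 1) : 0 < norm2 f := by
  have hex : ∃ x, f x ≠ 0 := by
    by_contra h
    push_neg at h
    simp [h] at hf
  obtain ⟨x, hx⟩ := hex
  refine Real.sqrt_pos.2 (Finset.sum_pos' (fun y _ => sq_nonneg _) ⟨x, Finset.mem_univ x, ?_⟩)
  positivity

lemma abs_le_norm2 (f : X → ℝ) (x : X) : |f x| ≤ norm2 f := by
  rw [norm2, ← Real.sqrt_sq_eq_abs]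
  exact Real.sqrt_le_sqrt (Finset.single_le_sum (fun y _ => sq_nonneg (f y)) (Finset.mem_univ x))

lemma sum_sq_eq_norm2_sq (f : X → ℝ) : ∑ x, f x ^ 2 = norm2 f ^ 2 := by
  rw [norm2, Real.sq_sqrt (Finset.sum_nonneg fun x _ => sq_nonneg _)]

lemma inner2_lt_norm2 {f g : X → ℝ} (hf : ∑ x, f x = 1) (hg : ∑ x, g x = 1)
    (hne : f ≠ g) : inner2 f g < norm2 f * norm2 g := by
  rcases (inner2_le_norm2 f g).lt_or_eq with h | h
  · exact h
  exfalso
  rw [inner2_eq_inner, norm2_eq_norm f, norm2_eq_norm g, inner_eq_norm_mul_iff_real] at h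
  have hpt : ∀ x, ‖(WithLp.equiv 2 (X → ℝ)).symm g‖ * f x
      = ‖(WithLp.equiv 2 (X → ℝ)).symm f‖ * g x := by
    intro x
    have := congrArg (fun v => v x) h
    simpa [PiLp.toLp_apply, PiLp.smul_apply, smul_eq_mul] using this
  have hsum : ‖(WithLp.equiv 2 (X → ℝ)).symm g‖ = ‖(WithLp.equiv 2 (X → ℝ)).symm f‖ := by
    have h2 : ∑ x, ‖(WithLp.equiv 2 (X → ℝ)).symm g‖ * f x
        = ∑ x, ‖(WithLp.equiv 2 (X → ℝ)).symm f‖ * g x :=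
      Finset.sum_congr rfl fun x _ => hpt x
    rwa [← Finset.mul_sum, ← Finset.mul_sum, hf, hg, mul_one, mul_one] at h2
  have hFpos : 0 < ‖(WithLp.equiv 2 (X → ℝ)).symm f‖ := by
    rw [← norm2_eq_norm]; exact norm2_pos hf
  apply hne
  funext x
  have hx := hpt x
  rw [hsum] at hx
  exact mul_left_cancel₀ hFpos.ne' hx

end AuxNorm2

section AuxStage

variable {n : ℕ} {A : Fin n → Type*} [∀ l, Fintype (A l)]

omit [∀ l, Fintype (A l)] in
@[simp] lemma joinA_apply_self (i : Fin n) (j : A i) (b) : joinA i j b i = j := by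
  simp [joinA]

omit [∀ l, Fintype (A l)] in
@[simp] lemma restr_joinA (i : Fin n) (j : A i) (b) : restr i (joinA i j b) = b := by
  funext l
  simp [restr, joinA, l.2]

omit [∀ l, Fintype (A l)] in
@[simp] lemma joinA_restr (i : Fin n) (a : ∀ l, A l) : joinA i (a i) (restr i a) = a := by
  funext l
  by_cases h : l = i
  · subst h; simp [joinA]
  · simp [joinA, h, restr]

/-- The equivalence `A i × A_{-i} ≃ A`. -/
def prodEquiv (i : Fin n) : (A i × ∀ l : {l : Fin n // l ≠ i}, A l) ≃ (∀ l, A l) where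
  toFun p := joinA i p.1 p.2
  invFun a := (a i, restr i a)
  left_inv p := by simp
  right_inv a := by simp

lemma sum_joinA (i : Fin n) (f : (∀ l, A l) → ℝ) :
    ∑ a, f a = ∑ j : A i, ∑ b, f (joinA i j b) := by
  rw [← Equiv.sum_comp (prodEquiv (A := A) i) f, Fintype.sum_prod_type]
  rfl

variable {σ : (∀ l, A l) → ℝ}

lemma marg_nonneg (hσ : ∀ a, 0 ≤ σ a) (i : Fin n) (j : A i) : 0 ≤ marg σ i j :=
  Finset.sum_nonneg fun b _ => hσ _

lemma sum_marg (i : Fin n) : ∑ j : A i, marg σ i j = ∑ a, σ a := (sum_joinA i σ).symm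

lemma joinA_eq_zero (hσ : ∀ a, 0 ≤ σ a) {i : Fin n} {j : A i}
    (h : ¬ 0 < marg σ i j) (b) : σ (joinA i j b) = 0 := by
  have h0 : marg σ i j = 0 := le_antisymm (not_lt.1 h) (marg_nonneg hσ i j)
  exact (Finset.sum_eq_zero_iff_of_nonneg (fun b _ => hσ _)).1 h0 b (Finset.mem_univ _)

lemma condl_nonneg (hσ : ∀ a, 0 ≤ σ a) (i : Fin n) (j : A i) (b) : 0 ≤ condl σ i j b := by
  rw [condl]
  split_ifs with h
  · exact div_nonneg (hσ _) h.le
  · exact le_refl 0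

lemma sum_condl (hσ : ∀ a, 0 ≤ σ a) {i : Fin n} {j : A i} (h : 0 < marg σ i j) :
    ∑ b, condl σ i j b = 1 := by
  simp only [condl, if_pos h]
  rw [← Finset.sum_div]
  exact div_self h.ne'

lemma condl_mul (hσ : ∀ a, 0 ≤ σ a) {i : Fin n} {j : A i} (h : 0 < marg σ i j) (b) :
    σ (joinA i j b) = marg σ i j * condl σ i j b := by
  rw [condl, if_pos h, mul_div_cancel₀ _ h.ne']

lemma wit_joinA (σ : (∀ l, A l) → ℝ) (i : Fin n) (j : A i) (b) :
    wit σ i (joinA i j b) =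
      if 0 < marg σ i j then condl σ i j b / norm2 (condl σ i j) else 0 := by
  simp only [wit, joinA_apply_self, restr_joinA]

lemma wit_nonneg (hσ : ∀ a, 0 ≤ σ a) (i : Fin n) (a) : 0 ≤ wit σ i a := by
  rw [wit]
  split_ifs with h
  · exact div_nonneg (condl_nonneg hσ _ _ _) (norm2_nonneg' _)
  · exact le_refl 0

lemma wit_le_one (hσ : ∀ a, 0 ≤ σ a) (i : Fin n) (a) : wit σ i a ≤ 1 := by
  rw [wit]
  split_ifs with h
  · exact div_le_one_of_le₀ (le_trans (le_abs_self _) (abs_le_norm2 _ _)) (norm2_nonneg' _)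
  · exact zero_le_one

/-- Expected witness reward on-policy. -/
noncomputable def EOn (σ : (∀ l, A l) → ℝ) (i : Fin n) : ℝ := ∑ a, σ a * wit σ i a

/-- Expected witness reward when deviating to `j`. -/
noncomputable def EDev (σ : (∀ l, A l) → ℝ) (i : Fin n) (j : A i) : ℝ :=
  ∑ a, σ a * wit σ i (joinA i j (restr i a))

lemma EOn_eq (hσ : IsMixed σ) (i : Fin n) :
    EOn σ i = ∑ k : A i, marg σ i k * norm2 (condl σ i k) := by
  rw [EOn, sum_joinA i]
  refine Finset.sum_congr rfl fun k _ => ?_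
  by_cases h : 0 < marg σ i k
  · have hn : 0 < norm2 (condl σ i k) := norm2_pos (sum_condl hσ.1 h)
    calc ∑ b, σ (joinA i k b) * wit σ i (joinA i k b)
        = ∑ b, marg σ i k * (condl σ i k b ^ 2 / norm2 (condl σ i k)) := by
          refine Finset.sum_congr rfl fun b _ => ?_
          rw [condl_mul hσ.1 h b, wit_joinA, if_pos h]
          ring
      _ = marg σ i k * ((∑ b, condl σ i k b ^ 2) / norm2 (condl σ i k)) := by
          rw [← Finset.mul_sum, Finset.sum_div]
      _ = marg σ i k * norm2 (condl σ i k) := by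
          rw [sum_sq_eq_norm2_sq, sq, mul_div_assoc, div_self hn.ne', mul_one]
  · have h0 : marg σ i k = 0 := le_antisymm (not_lt.1 h) (marg_nonneg hσ.1 i k)
    rw [h0, zero_mul]
    refine Finset.sum_eq_zero fun b _ => ?_
    rw [joinA_eq_zero hσ.1 h b, zero_mul]

lemma EDev_eq (hσ : IsMixed σ) (i : Fin n) (j : A i) :
    EDev σ i j = if 0 < marg σ i j then
        ∑ k : A i, marg σ i k * (inner2 (condl σ i k) (condl σ i j) / norm2 (condl σ i j))
      else 0 := by
  rw [EDev, sum_joinA i]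
  split_ifs with h
  · refine Finset.sum_congr rfl fun k _ => ?_
    by_cases hk : 0 < marg σ i k
    · calc ∑ b, σ (joinA i k b) * wit σ i (joinA i j (restr i (joinA i k b)))
          = ∑ b, marg σ i k * (condl σ i k b * condl σ i j b) / norm2 (condl σ i j) := by
            refine Finset.sum_congr rfl fun b _ => ?_
            rw [restr_joinA, wit_joinA, if_pos h, condl_mul hσ.1 hk b]
            ring
        _ = marg σ i k * (inner2 (condl σ i k) (condl σ i j) / norm2 (condl σ i j)) := by
            rw [inner2, ← Finset.sum_div, ← Finset.mul_sum, mul_div_assoc]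
    · have h0 : marg σ i k = 0 := le_antisymm (not_lt.1 hk) (marg_nonneg hσ.1 i k)
      rw [h0, zero_mul]
      refine Finset.sum_eq_zero fun b _ => ?_
      rw [joinA_eq_zero hσ.1 hk b, zero_mul]
  · refine Finset.sum_eq_zero fun k _ => Finset.sum_eq_zero fun b _ => ?_
    rw [restr_joinA, wit_joinA, if_neg h, mul_zero]

lemma EOn_pos (hσ : IsMixed σ) (i : Fin n) : 0 < EOn σ i := by
  rw [EOn_eq hσ]
  have hex : ∃ k : A i, 0 < marg σ i k := by
    by_contra hno
    push_neg at hno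
    have h0 : ∑ k : A i, marg σ i k = 0 := le_antisymm
      (Finset.sum_nonpos fun k _ => hno k) (Finset.sum_nonneg fun k _ => marg_nonneg hσ.1 i k)
    rw [sum_marg, hσ.2] at h0
    exact one_ne_zero h0
  obtain ⟨k, hk⟩ := hex
  refine Finset.sum_pos' (fun l _ => mul_nonneg (marg_nonneg hσ.1 i l) (norm2_nonneg' _))
    ⟨k, Finset.mem_univ k, mul_pos hk (norm2_pos (sum_condl hσ.1 hk))⟩

/-- Key positivity: under the stage condition, deviating to an action of marginal `< 1`
strictly loses witness reward. -/
lemma gap_pos (hσ : IsMixed σ) {i : Fin n}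
    (hc : (∃! j : A i, 0 < marg σ i j) ∨
      (∃ j k : A i, j ≠ k ∧ 0 < marg σ i j ∧ 0 < marg σ i k ∧
        condl σ i j ≠ condl σ i k))
    {j : A i} (hj : marg σ i j < 1) : 0 < EOn σ i - EDev σ i j := by
  by_cases hpj : 0 < marg σ i j
  · rcases hc with ⟨j₀, hj₀, hu⟩ | ⟨j₁, k₁, hne, h1, h2, hcne⟩
    · exfalso
      have hjj : j = j₀ := hu j hpj
      have hall : ∀ k : A i, k ≠ j₀ → marg σ i k = 0 := by
        intro k hk
        by_contra h0
        exact hk (hu k (lt_of_le_of_ne (marg_nonneg hσ.1 i k) (Ne.symm h0)))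
      have hsum : marg σ i j₀ = 1 := by
        have hs := sum_marg (σ := σ) i
        rw [hσ.2] at hs
        rw [← hs, Finset.sum_eq_single j₀ (fun k _ hk => hall k hk) (by simp)]
      rw [hjj, hsum] at hj
      exact lt_irrefl 1 hj
    · have hm : ∃ m, 0 < marg σ i m ∧ condl σ i m ≠ condl σ i j := by
        by_cases h : condl σ i j₁ = condl σ i j
        · exact ⟨k₁, h2, fun e => hcne (h.trans e.symm)⟩
        · exact ⟨j₁, h1, h⟩
      obtain ⟨m, hm1, hm2⟩ := hm
      have hnj : 0 < norm2 (condl σ i j) := norm2_pos (sum_condl hσ.1 hpj)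
      rw [EOn_eq hσ, EDev_eq hσ, if_pos hpj, ← Finset.sum_sub_distrib]
      refine Finset.sum_pos' (fun k _ => ?_) ⟨m, Finset.mem_univ m, ?_⟩
      · rw [← mul_sub]
        refine mul_nonneg (marg_nonneg hσ.1 i k) ?_
        rw [sub_nonneg]
        exact (div_le_iff₀ hnj).2 (inner2_le_norm2 _ _)
      · rw [← mul_sub]
        refine mul_pos hm1 ?_
        rw [sub_pos]
        exact (div_lt_iff₀ hnj).2 (inner2_lt_norm2 (sum_condl hσ.1 hm1) (sum_condl hσ.1 hpj) hm2)
  · rw [EDev_eq hσ, if_neg hpj, sub_zero]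
    exact EOn_pos hσ i

end AuxStage

section AuxDP

/-- Uniform bound on backward-recursion values with geometrically decaying rewards. -/
lemma val_bound {S : Type*} [Fintype S] {A' : Type*} [Fintype A'] {H : ℕ}
    (π : Fin H → S → A' → ℝ) (hπ : ∀ h s, (∀ a, 0 ≤ π h s a) ∧ ∑ a, π h s a = 1)
    (G : Fin H → S → A' → S → ℝ)
    (hG : ∀ h s a, (∀ s', 0 ≤ G h s a s') ∧ ∑ s', G h s a s' = 1)
    (F : Fin H → S → A' → ℝ) {B lam : ℝ} (hB : 0 ≤ B) (hl0 : 0 ≤ lam) (hl1 : lam < 1)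
    (hF : ∀ h s a, |F h s a| ≤ B * lam ^ (h : ℕ))
    (V : ℕ → S → ℝ)
    (hV : ∀ h s, V h s = if hh : h < H then
        ∑ a, π ⟨h, hh⟩ s a * (F ⟨h, hh⟩ s a + ∑ s', G ⟨h, hh⟩ s a s' * V (h + 1) s')
      else 0) :
    ∀ h s, |V h s| ≤ B / (1 - lam) * lam ^ h := by
  have h1l : 0 < 1 - lam := by linarith
  have hK : 0 ≤ B / (1 - lam) := div_nonneg hB h1l.le
  have main : ∀ m h s, H - h ≤ m → |V h s| ≤ B / (1 - lam) * lam ^ h := by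
    intro m
    induction m with
    | zero =>
      intro h s hm
      rw [hV, dif_neg (by omega)]
      simpa using mul_nonneg hK (pow_nonneg hl0 h)
    | succ m ih =>
      intro h s hm
      rw [hV]
      by_cases hh : h < H
      · rw [dif_pos hh]
        have key : ∀ a, |F ⟨h, hh⟩ s a + ∑ s', G ⟨h, hh⟩ s a s' * V (h + 1) s'|
            ≤ B * lam ^ h + B / (1 - lam) * lam ^ (h + 1) := by
          intro a
          have h2 : |∑ s', G ⟨h, hh⟩ s a s' * V (h + 1) s'| ≤ B / (1 - lam) * lam ^ (h + 1) := by
            calc |∑ s', G ⟨h, hh⟩ s a s' * V (h + 1) s'|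
                ≤ ∑ s', |G ⟨h, hh⟩ s a s' * V (h + 1) s'| := Finset.abs_sum_le_sum_abs _ _
              _ = ∑ s', G ⟨h, hh⟩ s a s' * |V (h + 1) s'| := by
                  refine Finset.sum_congr rfl fun s' _ => ?_
                  rw [abs_mul, abs_of_nonneg ((hG ⟨h, hh⟩ s a).1 s')]
              _ ≤ ∑ s', G ⟨h, hh⟩ s a s' * (B / (1 - lam) * lam ^ (h + 1)) :=
                  Finset.sum_le_sum fun s' _ => mul_le_mul_of_nonneg_left
                    (ih (h + 1) s' (by omega)) ((hG ⟨h, hh⟩ s a).1 s')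
              _ = B / (1 - lam) * lam ^ (h + 1) := by
                  rw [← Finset.sum_mul, (hG ⟨h, hh⟩ s a).2, one_mul]
          calc |F ⟨h, hh⟩ s a + ∑ s', G ⟨h, hh⟩ s a s' * V (h + 1) s'|
              ≤ |F ⟨h, hh⟩ s a| + |∑ s', G ⟨h, hh⟩ s a s' * V (h + 1) s'| := abs_add_le _ _
            _ ≤ B * lam ^ h + B / (1 - lam) * lam ^ (h + 1) := add_le_add (hF ⟨h, hh⟩ s a) h2
        calc |∑ a, π ⟨h, hh⟩ s a * (F ⟨h, hh⟩ s a + ∑ s', G ⟨h, hh⟩ s a s' * V (h + 1) s')|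
            ≤ ∑ a, |π ⟨h, hh⟩ s a * (F ⟨h, hh⟩ s a + ∑ s', G ⟨h, hh⟩ s a s' * V (h + 1) s')| :=
              Finset.abs_sum_le_sum_abs _ _
          _ = ∑ a, π ⟨h, hh⟩ s a * |F ⟨h, hh⟩ s a + ∑ s', G ⟨h, hh⟩ s a s' * V (h + 1) s'| := by
              refine Finset.sum_congr rfl fun a _ => ?_
              rw [abs_mul, abs_of_nonneg ((hπ ⟨h, hh⟩ s).1 a)]
          _ ≤ ∑ a, π ⟨h, hh⟩ s a * (B * lam ^ h + B / (1 - lam) * lam ^ (h + 1)) :=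
              Finset.sum_le_sum fun a _ => mul_le_mul_of_nonneg_left (key a) ((hπ ⟨h, hh⟩ s).1 a)
          _ = B * lam ^ h + B / (1 - lam) * lam ^ (h + 1) := by
              rw [← Finset.sum_mul, (hπ ⟨h, hh⟩ s).2, one_mul]
          _ = B / (1 - lam) * lam ^ h := by
              rw [pow_succ]
              field_simp
              ring
      · rw [dif_neg hh]
        simpa using mul_nonneg hK (pow_nonneg hl0 h)
  exact fun h s => main H h s (by omega)

/-- One-step strict comparison: if the expected immediate reward gap exceeds `2 M` and both
continuation values are bounded by `M`, the one-step values compare strictly. -/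
lemma step_lt {S A' : Type*} [Fintype S] [Fintype A']
    (p : A' → ℝ) (hp : (∀ a, 0 ≤ p a) ∧ ∑ a, p a = 1)
    (F1 F2 : A' → ℝ) (G1 G2 : A' → S → ℝ)
    (hG1 : ∀ a, (∀ s', 0 ≤ G1 a s') ∧ ∑ s', G1 a s' = 1)
    (hG2 : ∀ a, (∀ s', 0 ≤ G2 a s') ∧ ∑ s', G2 a s' = 1)
    (V1 V2 : S → ℝ) {M : ℝ}
    (hV1 : ∀ s', |V1 s'| ≤ M) (hV2 : ∀ s', |V2 s'| ≤ M)
    (hgap : 2 * M < ∑ a, p a * F1 a - ∑ a, p a * F2 a) :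
    ∑ a, p a * (F2 a + ∑ s', G2 a s' * V2 s') < ∑ a, p a * (F1 a + ∑ s', G1 a s' * V1 s') := by
  have key1 : ∀ a, |∑ s', G1 a s' * V1 s'| ≤ M := by
    intro a
    calc |∑ s', G1 a s' * V1 s'| ≤ ∑ s', |G1 a s' * V1 s'| := Finset.abs_sum_le_sum_abs _ _
      _ = ∑ s', G1 a s' * |V1 s'| := Finset.sum_congr rfl fun s' _ => by
          rw [abs_mul, abs_of_nonneg ((hG1 a).1 s')]
      _ ≤ ∑ s', G1 a s' * M := Finset.sum_le_sum fun s' _ =>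
          mul_le_mul_of_nonneg_left (hV1 s') ((hG1 a).1 s')
      _ = M := by rw [← Finset.sum_mul, (hG1 a).2, one_mul]
  have key2 : ∀ a, |∑ s', G2 a s' * V2 s'| ≤ M := by
    intro a
    calc |∑ s', G2 a s' * V2 s'| ≤ ∑ s', |G2 a s' * V2 s'| := Finset.abs_sum_le_sum_abs _ _
      _ = ∑ s', G2 a s' * |V2 s'| := Finset.sum_congr rfl fun s' _ => by
          rw [abs_mul, abs_of_nonneg ((hG2 a).1 s')]
      _ ≤ ∑ s', G2 a s' * M := Finset.sum_le_sum fun s' _ =>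
          mul_le_mul_of_nonneg_left (hV2 s') ((hG2 a).1 s')
      _ = M := by rw [← Finset.sum_mul, (hG2 a).2, one_mul]
  have b1 : -M ≤ ∑ a, p a * ∑ s', G1 a s' * V1 s' := by
    calc -M = ∑ a, p a * (-M) := by rw [← Finset.sum_mul, hp.2, one_mul]
      _ ≤ ∑ a, p a * ∑ s', G1 a s' * V1 s' := Finset.sum_le_sum fun a _ =>
          mul_le_mul_of_nonneg_left (neg_le_of_abs_le (key1 a)) (hp.1 a)
  have b2 : ∑ a, p a * ∑ s', G2 a s' * V2 s' ≤ M := by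
    calc ∑ a, p a * ∑ s', G2 a s' * V2 s' ≤ ∑ a, p a * M := Finset.sum_le_sum fun a _ =>
          mul_le_mul_of_nonneg_left (le_of_abs_le (key2 a)) (hp.1 a)
      _ = M := by rw [← Finset.sum_mul, hp.2, one_mul]
  simp only [mul_add, Finset.sum_add_distrib]
  linarith [b1, b2, hgap]

end AuxDP

section MG

variable {n : ℕ} {A : Fin n → Type*} [∀ l, Fintype (A l)]
  {S : Type*} [Fintype S] {H : ℕ}

/-- On-policy value, by backward recursion: `V_{H+1} = 0` and
`V_h(s) = ∑_a π_h(s)(a) [ rᵢ_h(s,a) + ∑_{s'} P_h(s,a)(s') V_{h+1}(s') ]`. -/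
noncomputable def Vpol (P : Fin H → S → (∀ l, A l) → S → ℝ)
    (π : Fin H → S → (∀ l, A l) → ℝ)
    (ri : Fin H → S → (∀ l, A l) → ℝ) : ℕ → S → ℝ :=
  fun h s =>
    if hh : h < H then
      ∑ a : ∀ l, A l, π ⟨h, hh⟩ s a *
        (ri ⟨h, hh⟩ s a + ∑ s' : S, P ⟨h, hh⟩ s a s' * Vpol P π ri (h + 1) s')
    else 0
  termination_by h _ => H - h
  decreasing_by omega

/-- Value of a deterministic Markov deviation `d : {1,…,H} × S → A i` of player `i`:
`V^d_{H+1} = 0` and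
`V^d_h(s) = ∑_a π_h(s)(a) [ rᵢ_h(s,(d(h,s),a_{-i})) + ∑_{s'} P_h(s,(d(h,s),a_{-i}))(s') V^d_{h+1}(s') ]`. -/
noncomputable def Vdev (P : Fin H → S → (∀ l, A l) → S → ℝ)
    (π : Fin H → S → (∀ l, A l) → ℝ)
    (ri : Fin H → S → (∀ l, A l) → ℝ)
    (i : Fin n) (d : Fin H → S → A i) : ℕ → S → ℝ :=
  fun h s =>
    if hh : h < H then
      ∑ a : ∀ l, A l, π ⟨h, hh⟩ s a *
        (ri ⟨h, hh⟩ s (joinA i (d ⟨h, hh⟩ s) (restr i a)) +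
          ∑ s' : S, P ⟨h, hh⟩ s (joinA i (d ⟨h, hh⟩ s) (restr i a)) s' *
            Vdev P π ri i d (h + 1) s')
    else 0
  termination_by h _ => H - h
  decreasing_by omega

end MG

/-- **sMPCCE installability (Theorem `sMPCCE`).** If at every stage `(h, s)` and for every
player `i` the stage distribution `π_h(s)` either supports exactly one action of `A i` or
supports two actions with differing stage conditionals, then for every reward bound `B > 0`
there is a bounded reward function `r` such that for every player `i`, stage `(h, s)`, and
deterministic Markov deviation `d` whose prescribed action always has stage marginal `< 1`,
we have `V^π_{i,h}(s) > V^d_{i,h}(s)`. -/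
theorem sMPCCE_installable {n : ℕ} {A : Fin n → Type*}
    [∀ l, Fintype (A l)] [∀ l, Nonempty (A l)]
    {S : Type*} [Fintype S] [Nonempty S] {H : ℕ}
    (P : Fin H → S → (∀ l, A l) → S → ℝ)
    (hP : ∀ h s a, (∀ s', 0 ≤ P h s a s') ∧ ∑ s' : S, P h s a s' = 1)
    (π : Fin H → S → (∀ l, A l) → ℝ)
    (hπ : ∀ h s, IsMixed (π h s))
    (hc : ∀ h : Fin H, ∀ s : S, ∀ i : Fin n,
      (∃! j : A i, 0 < marg (π h s) i j) ∨
      (∃ j k : A i, j ≠ k ∧ 0 < marg (π h s) i j ∧ 0 < marg (π h s) i k ∧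
        condl (π h s) i j ≠ condl (π h s) i k)) :
    ∀ B : ℝ, 0 < B →
      ∃ r : Fin n → Fin H → S → (∀ l, A l) → ℝ,
        (∀ i h s a, |r i h s a| ≤ B) ∧
        ∀ i : Fin n, ∀ h : ℕ, h < H → ∀ s : S, ∀ d : Fin H → S → A i,
          (∀ (h' : Fin H) (s' : S), marg (π h' s') i (d h' s') < 1) →
          Vdev P π (r i) i d h s < Vpol P π (r i) h s := by
  intro B hB
  by_cases hne : Nonempty (Fin H × S × (Σ i : Fin n, A i))
  · haveI := hne
    classical
    -- uniform positive lower bound on all stage gaps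
    have hδ : ∃ δ : ℝ, 0 < δ ∧ ∀ (h : Fin H) (s : S) (i : Fin n) (j : A i),
        marg (π h s) i j < 1 → δ ≤ EOn (π h s) i - EDev (π h s) i j := by
      let D : Fin H × S × (Σ i : Fin n, A i) → ℝ := fun x =>
        if marg (π x.1 x.2.1) x.2.2.1 x.2.2.2 < 1 then
          EOn (π x.1 x.2.1) x.2.2.1 - EDev (π x.1 x.2.1) x.2.2.1 x.2.2.2
        else 1
      have hD : ∀ x, 0 < D x := by
        rintro ⟨h, s, i, j⟩
        show 0 < if marg (π h s) i j < 1 then EOn (π h s) i - EDev (π h s) i j else 1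
        split_ifs with hm
        · exact gap_pos (hπ h s) (hc h s i) hm
        · exact one_pos
      refine ⟨Finset.univ.inf' Finset.univ_nonempty D,
        (Finset.lt_inf'_iff _).2 fun x _ => hD x, ?_⟩
      intro h s i j hm
      have hle := Finset.inf'_le (b := (h, s, ⟨i, j⟩)) D (Finset.mem_univ _)
      have heq : D (h, s, ⟨i, j⟩) = EOn (π h s) i - EDev (π h s) i j := if_pos hm
      rw [heq] at hle
      exact hle
    obtain ⟨δ, hδpos, hδle⟩ := hδ
    obtain ⟨lam, hlam_def⟩ : ∃ lam : ℝ, lam = δ / (δ + 3) := ⟨_, rfl⟩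
    have hd3 : (0:ℝ) < δ + 3 := by linarith
    have hlam0 : 0 < lam := by rw [hlam_def]; exact div_pos hδpos hd3
    have hlam1 : lam < 1 := by rw [hlam_def]; exact (div_lt_one hd3).2 (by linarith)
    have h1l : 0 < 1 - lam := by linarith
    have hKe : B / (1 - lam) * (1 - lam) = B := div_mul_cancel₀ B h1l.ne'
    have hKpos : 0 < B / (1 - lam) := div_pos hB h1l
    have habs : ∀ (h' : Fin H) (s' : S) (i : Fin n) (a : ∀ l, A l),
        |B * lam ^ (h' : ℕ) * wit (π h' s') i a| ≤ B * lam ^ (h' : ℕ) := by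
      intro h' s' i a
      have hbl : 0 ≤ B * lam ^ (h' : ℕ) := mul_nonneg hB.le (pow_nonneg hlam0.le _)
      rw [abs_mul, abs_of_nonneg hbl, abs_of_nonneg (wit_nonneg (hπ h' s').1 i a)]
      exact mul_le_of_le_one_right hbl (wit_le_one (hπ h' s').1 i a)
    refine ⟨fun i h s a => B * lam ^ (h : ℕ) * wit (π h s) i a, ?_, ?_⟩
    · intro i h s a
      refine le_trans (habs h s i a) ?_
      calc B * lam ^ (h : ℕ) ≤ B * 1 :=
            mul_le_mul_of_nonneg_left (pow_le_one₀ hlam0.le hlam1.le) hB.le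
        _ = B := mul_one B
    · intro i h hhH s d hd
      show Vdev P π (fun h' s' a => B * lam ^ (h' : ℕ) * wit (π h' s') i a) i d h s
        < Vpol P π (fun h' s' a => B * lam ^ (h' : ℕ) * wit (π h' s') i a) h s
      have hpolB := val_bound π (fun h' s' => hπ h' s') P hP
        (fun h' s' a => B * lam ^ (h' : ℕ) * wit (π h' s') i a)
        hB.le hlam0.le hlam1 (fun h' s' a => habs h' s' i a)
        (Vpol P π (fun h' s' a => B * lam ^ (h' : ℕ) * wit (π h' s') i a))
        (fun h' s' => by rw [Vpol])
      have hdevB := val_bound π (fun h' s' => hπ h' s')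
        (fun h' s' a s'' => P h' s' (joinA i (d h' s') (restr i a)) s'')
        (fun h' s' a => hP h' s' _)
        (fun h' s' a => B * lam ^ (h' : ℕ) * wit (π h' s') i (joinA i (d h' s') (restr i a)))
        hB.le hlam0.le hlam1 (fun h' s' a => habs h' s' i _)
        (Vdev P π (fun h' s' a => B * lam ^ (h' : ℕ) * wit (π h' s') i a) i d)
        (fun h' s' => by rw [Vdev])
      rw [Vdev, Vpol, dif_pos hhH, dif_pos hhH]
      have hlp : 0 < lam ^ h := pow_pos hlam0 h
      -- the immediate-reward gap dominates twice the continuation bound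
      have key : 2 * lam < δ * (1 - lam) := by
        rw [hlam_def]
        have e1 : 2 * (δ / (δ + 3)) = (2 * δ) / (δ + 3) := by ring
        have e2 : δ * (1 - δ / (δ + 3)) = (3 * δ) / (δ + 3) := by field_simp; ring
        rw [e1, e2, div_lt_div_iff₀ hd3 hd3]
        nlinarith [mul_pos hδpos hd3]
      have hKl : 2 * (B / (1 - lam) * lam ^ (h + 1)) < B * lam ^ h * δ := by
        have step := mul_lt_mul_of_pos_right key (mul_pos hKpos hlp)
        have e3 : δ * (1 - lam) * (B / (1 - lam) * lam ^ h) = B * lam ^ h * δ := by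
          have hbb : (1 - lam) * (B / (1 - lam)) = B := by
            field_simp
          calc δ * (1 - lam) * (B / (1 - lam) * lam ^ h)
              = δ * ((1 - lam) * (B / (1 - lam))) * lam ^ h := by ring
            _ = B * lam ^ h * δ := by rw [hbb]; ring
        have e4 : 2 * lam * (B / (1 - lam) * lam ^ h)
            = 2 * (B / (1 - lam) * lam ^ (h + 1)) := by rw [pow_succ]; ring
        rw [e3, e4] at step
        exact step
      have hEgap : δ ≤ EOn (π ⟨h, hhH⟩ s) i - EDev (π ⟨h, hhH⟩ s) i (d ⟨h, hhH⟩ s) :=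
        hδle ⟨h, hhH⟩ s i _ (hd ⟨h, hhH⟩ s)
      have e1 : ∑ a, π ⟨h, hhH⟩ s a * (B * lam ^ h * wit (π ⟨h, hhH⟩ s) i a)
          = B * lam ^ h * EOn (π ⟨h, hhH⟩ s) i := by
        rw [EOn, Finset.mul_sum]
        exact Finset.sum_congr rfl fun a _ => by ring
      have e2 : ∑ a, π ⟨h, hhH⟩ s a *
            (B * lam ^ h * wit (π ⟨h, hhH⟩ s) i (joinA i (d ⟨h, hhH⟩ s) (restr i a)))
          = B * lam ^ h * EDev (π ⟨h, hhH⟩ s) i (d ⟨h, hhH⟩ s) := by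
        rw [EDev, Finset.mul_sum]
        exact Finset.sum_congr rfl fun a _ => by ring
      have hgap2 : 2 * (B / (1 - lam) * lam ^ (h + 1)) <
          (∑ a, π ⟨h, hhH⟩ s a * (B * lam ^ h * wit (π ⟨h, hhH⟩ s) i a)) -
          ∑ a, π ⟨h, hhH⟩ s a *
            (B * lam ^ h * wit (π ⟨h, hhH⟩ s) i (joinA i (d ⟨h, hhH⟩ s) (restr i a))) := by
        rw [e1, e2]
        have hmul := mul_le_mul_of_nonneg_left hEgap (mul_pos hB hlp).le
        have hexp : B * lam ^ h * (EOn (π ⟨h, hhH⟩ s) i - EDev (π ⟨h, hhH⟩ s) i (d ⟨h, hhH⟩ s))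
            = B * lam ^ h * EOn (π ⟨h, hhH⟩ s) i
              - B * lam ^ h * EDev (π ⟨h, hhH⟩ s) i (d ⟨h, hhH⟩ s) := mul_sub _ _ _
        linarith [hKl, hmul]
      exact step_lt (π ⟨h, hhH⟩ s) (hπ _ _) _ _ _ _
        (fun a => hP ⟨h, hhH⟩ s a) (fun a => hP ⟨h, hhH⟩ s _)
        _ _ (fun s' => hpolB (h + 1) s') (fun s' => hdevB (h + 1) s') hgap2
  · refine ⟨fun _ _ _ _ => 0, fun i h s a => by simpa using hB.le, ?_⟩
    intro i h hhH s d hd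
    exact absurd ⟨(⟨h, hhH⟩, s, ⟨i, d ⟨h, hhH⟩ s⟩)⟩ hne
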